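/- For any even positive integer p and any reals a, b, one has (b − a)(b^{p-1} − a^{p-1}) ≥ (2/p)^2 (p−1) (sign(b)|b|^{p/2} − sign(a)|a|^{p/2})^2. -/

import Mathlib

open intervalIntegral MeasureTheory Filter

-- derivative lemma
lemma aux_hasDerivAt (m : ℕ) (hm : 1 ≤ m) (x : ℝ) :
    HasDerivAt (fun z : ℝ => z * |z| ^ (m - 1)) ((m : ℝ) * |x| ^ (m - 1)) x := by
  obtain ⟨k, rfl⟩ : ∃ k, m = k + 1 := ⟨m - 1, (Nat.succ_pred_eq_of_pos hm).symm⟩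
  simp only [Nat.add_sub_cancel]
  rcases lt_trichotomy x 0 with hx | hx | hx
  · have hev : ∀ᶠ y in nhds x, y * |y| ^ k = (-1) ^ k * y ^ (k + 1) := by
      filter_upwards [eventually_lt_nhds hx] with y hy
      rw [abs_of_neg hy, neg_pow, pow_succ]
      ring
    have h1 : HasDerivAt (fun y : ℝ => (-1) ^ k * y ^ (k + 1))
        ((-1) ^ k * ((k + 1 : ℕ) * x ^ k)) x :=
      (hasDerivAt_pow (k + 1) x).const_mul _
    have h2 := h1.congr_of_eventuallyEq hev
    refine h2.congr_deriv ?_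
    rw [abs_of_neg hx, neg_pow]
    push_cast
    ring
  · subst hx
    rcases Nat.eq_zero_or_pos k with rfl | hk
    · have : (fun z : ℝ => z * |z| ^ 0) = fun z : ℝ => z := by
        funext z; simp
      rw [this]
      exact (hasDerivAt_id' (0 : ℝ)).congr_deriv (by simp)
    · have hd : ((k + 1 : ℕ) : ℝ) * |(0:ℝ)| ^ k = 0 := by
        simp [zero_pow (by omega : k ≠ 0)]
      rw [hd, hasDerivAt_iff_isLittleO]
      simp only [sub_zero, mul_zero, zero_mul, smul_zero]
      rw [Asymptotics.isLittleO_iff]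
      intro c hc
      have htend : Tendsto (fun y : ℝ => |y| ^ k) (nhds 0) (nhds 0) := by
        have : Continuous fun y : ℝ => |y| ^ k := (continuous_abs).pow _
        simpa [zero_pow (by omega : k ≠ 0)] using this.tendsto 0
      filter_upwards [htend.eventually_le_const hc] with y hy
      simp only [sub_zero, Real.norm_eq_abs, abs_mul, abs_abs, abs_pow]
      calc |y| * |y| ^ k = |y| ^ k * |y| := by ring
        _ ≤ c * |y| := mul_le_mul_of_nonneg_right hy (abs_nonneg _)
  · have hev : ∀ᶠ y in nhds x, y * |y| ^ k = y ^ (k + 1) := by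
      filter_upwards [eventually_gt_nhds hx] with y hy
      rw [abs_of_pos hy, pow_succ]
      ring
    have h2 := (hasDerivAt_pow (k + 1) x).congr_of_eventuallyEq hev
    refine h2.congr_deriv ?_
    rw [abs_of_pos hx]
    push_cast
    ring

-- FTC
lemma aux_integral (m : ℕ) (hm : 1 ≤ m) (a b : ℝ) :
    ∫ z in a..b, (m : ℝ) * |z| ^ (m - 1) = b * |b| ^ (m - 1) - a * |a| ^ (m - 1) :=
  intervalIntegral.integral_eq_sub_of_hasDerivAt (fun x _ => aux_hasDerivAt m hm x)
    ((continuous_const.mul ((continuous_abs).pow _)).intervalIntegrable a b)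

-- Cauchy–Schwarz (elementary)
lemma aux_cs (f : ℝ → ℝ) (hf : Continuous f) (a b : ℝ) (hab : a ≤ b) :
    (∫ z in a..b, f z) ^ 2 ≤ (b - a) * ∫ z in a..b, (f z) ^ 2 := by
  rcases eq_or_lt_of_le hab with rfl | hab'
  · simp
  · have hba : (0 : ℝ) < b - a := sub_pos.mpr hab'
    set I := ∫ z in a..b, f z with hI
    set S := ∫ z in a..b, (f z) ^ 2 with hS
    set t := I / (b - a) with ht
    have i1 : IntervalIntegrable (fun z => (f z) ^ 2) volume a b :=
      ((hf.pow 2)).intervalIntegrable a b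
    have i2 : IntervalIntegrable (fun z => 2 * t * f z) volume a b :=
      (continuous_const.mul hf).intervalIntegrable a b
    have h0 : 0 ≤ ∫ z in a..b, (f z - t) ^ 2 :=
      intervalIntegral.integral_nonneg hab (fun x _ => sq_nonneg _)
    have expand : ∫ z in a..b, (f z - t) ^ 2 = S - 2 * t * I + t ^ 2 * (b - a) := by
      have hc : ∀ z : ℝ, (f z - t) ^ 2 = ((f z) ^ 2 - 2 * t * f z) + t ^ 2 := by
        intro z; ring
      rw [intervalIntegral.integral_congr (fun z _ => hc z),
          intervalIntegral.integral_add (i1.sub i2) (intervalIntegrable_const),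
          intervalIntegral.integral_sub i1 i2,
          intervalIntegral.integral_const_mul, intervalIntegral.integral_const]
      simp only [smul_eq_mul, ← hI, ← hS]
      ring
    rw [expand] at h0
    have e : S - 2 * t * I + t ^ 2 * (b - a) = S - I ^ 2 / (b - a) := by
      rw [ht]; field_simp; ring
    rw [e] at h0
    have h2 := mul_nonneg hba.le h0
    have e2 : (b - a) * (S - I ^ 2 / (b - a)) = (b - a) * S - I ^ 2 := by
      field_simp
    rw [e2] at h2
    linarith

lemma aux_key (m : ℕ) (hm : 1 ≤ m) (a b : ℝ) (hab : a ≤ b) :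
    ((2 * (m:ℝ) - 1) / (m:ℝ) ^ 2) * (b * |b| ^ (m - 1) - a * |a| ^ (m - 1)) ^ 2 ≤
      (b - a) * (b ^ (2 * m - 1) - a ^ (2 * m - 1)) := by
  have hm0 : (0:ℝ) < (m:ℝ) := by exact_mod_cast hm
  set I := ∫ z in a..b, |z| ^ (m - 1) with hI
  have hD : (m : ℝ) * I = b * |b| ^ (m - 1) - a * |a| ^ (m - 1) := by
    rw [hI, ← intervalIntegral.integral_const_mul]
    exact aux_integral m hm a b
  have hsq : ∀ z : ℝ, (|z| ^ (m - 1)) ^ 2 = z ^ (2 * m - 2) := by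
    intro z
    calc (|z| ^ (m - 1)) ^ 2 = (|z| ^ 2) ^ (m - 1) := by
          rw [← pow_mul, ← pow_mul, mul_comm]
      _ = (z ^ 2) ^ (m - 1) := by rw [sq_abs]
      _ = z ^ (2 * (m - 1)) := by rw [← pow_mul]
      _ = z ^ (2 * m - 2) := by rw [show 2 * (m - 1) = 2 * m - 2 by omega]
  have hcs := aux_cs (fun z => |z| ^ (m - 1)) ((continuous_abs).pow _) a b hab
  simp only [hsq] at hcs
  have hc2 : ((2 * m - 2 : ℕ) : ℝ) = 2 * (m : ℝ) - 2 := by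
    have h2 : (2:ℕ) ≤ 2 * m := by omega
    push_cast [Nat.cast_sub h2]
    ring
  have hJ : ∫ z in a..b, z ^ (2 * m - 2)
      = (b ^ (2 * m - 1) - a ^ (2 * m - 1)) / (2 * (m:ℝ) - 1) := by
    rw [integral_pow, show 2 * m - 2 + 1 = 2 * m - 1 by omega, hc2]
    ring_nf
  have h2m1 : (0:ℝ) < 2 * (m:ℝ) - 1 := by
    have : (1:ℝ) ≤ (m:ℝ) := by exact_mod_cast hm
    linarith
  rw [hJ] at hcs
  -- now: I ^ 2 ≤ (b - a) * ((B - A) / (2m-1))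
  rw [← hD]
  have hI2 : ((m:ℝ) * I) ^ 2 = (m:ℝ) ^ 2 * I ^ 2 := by ring
  rw [hI2]
  rw [← hI] at hcs
  have key : (2 * (m:ℝ) - 1) * I ^ 2 ≤ (b - a) * (b ^ (2 * m - 1) - a ^ (2 * m - 1)) := by
    have h := mul_le_mul_of_nonneg_left hcs h2m1.le
    calc (2 * (m:ℝ) - 1) * I ^ 2
        ≤ (2 * (m:ℝ) - 1) * ((b - a) * ((b ^ (2 * m - 1) - a ^ (2 * m - 1)) / (2 * (m:ℝ) - 1))) := h
      _ = (b - a) * (b ^ (2 * m - 1) - a ^ (2 * m - 1)) := by field_simp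
  have e : (2 * (m:ℝ) - 1) / (m:ℝ) ^ 2 * ((m:ℝ) ^ 2 * I ^ 2) = (2 * (m:ℝ) - 1) * I ^ 2 := by
    field_simp
  rw [e]
  exact key

lemma aux_sign (m : ℕ) (hm : 1 ≤ m) (x : ℝ) :
    (if 0 ≤ x then (1:ℝ) else -1) * |x| ^ m = x * |x| ^ (m - 1) := by
  obtain ⟨k, rfl⟩ : ∃ k, m = k + 1 := ⟨m - 1, (Nat.succ_pred_eq_of_pos hm).symm⟩
  simp only [Nat.add_sub_cancel]
  split_ifs with h
  · rw [abs_of_nonneg h, pow_succ]; ring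
  · rw [abs_of_neg (lt_of_not_ge h), pow_succ]; ring

/-- Pointwise inequality underlying the discrete ℓ^p Poincaré inequality:
`(b - a)(b^{p-1} - a^{p-1}) ≥ (2/p)² (p-1) (sign(b)|b|^{p/2} - sign(a)|a|^{p/2})²`
for even positive integers `p`. -/
theorem pointwise_power_inequality (p : ℕ) (hp : Even p) (hp0 : 0 < p) (a b : ℝ) :
    (2 / (p : ℝ)) ^ 2 * ((p : ℝ) - 1) *
        ((if 0 ≤ b then (1 : ℝ) else -1) * |b| ^ (p / 2) -
          (if 0 ≤ a then (1 : ℝ) else -1) * |a| ^ (p / 2)) ^ 2 ≤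
      (b - a) * (b ^ (p - 1) - a ^ (p - 1)) := by
  obtain ⟨m, rfl⟩ := hp
  have hm : 1 ≤ m := by omega
  have hm0 : ((m:ℝ)) ≠ 0 := by exact_mod_cast Nat.one_le_iff_ne_zero.mp hm
  rw [show (m + m) / 2 = m by omega, show m + m - 1 = 2 * m - 1 by omega,
      aux_sign m hm a, aux_sign m hm b]
  have hpc : ((m + m : ℕ) : ℝ) = 2 * (m:ℝ) := by push_cast; ring
  rw [hpc]
  have hco : (2 / (2 * (m:ℝ))) ^ 2 * (2 * (m:ℝ) - 1) = (2 * (m:ℝ) - 1) / (m:ℝ) ^ 2 := by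
    field_simp
  rw [hco]
  rcases le_total a b with h | h
  · exact aux_key m hm a b h
  · have k := aux_key m hm b a h
    have e1 : (a - b) * (a ^ (2*m-1) - b ^ (2*m-1)) = (b - a) * (b ^ (2*m-1) - a ^ (2*m-1)) := by
      ring
    have e2 : (a * |a| ^ (m-1) - b * |b| ^ (m-1)) ^ 2
        = (b * |b| ^ (m-1) - a * |a| ^ (m-1)) ^ 2 := by ring
    rw [e2, e1] at k
    exact k
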